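/- Let ρ ∈ M_A ⊗ M_A be a positive semidefinite matrix. The following are each equivalent to ρ being separable (ρ ∈ S_1): (1) (ψ ⊗ 1_A)(ρ) ∈ S_1 for every completely positive ψ: M_A → M_A; (2) (1_A ⊗ σ*)(ρ) is positive semidefinite for every positive map σ: M_A → M_A; (3) (1_A ⊗ ψ)(ρ) ∈ S_1 for every completely positive ψ: M_A → M_A; (4) (σ ⊗ 1_A)(ρ) is positive semidefinite for every positive map σ: M_A → M_A. -/

import Mathlib

open Matrix Finset
open scoped ComplexOrder Kronecker

/-- The algebra of `n × n` complex matrices. -/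
abbrev Mat (n : ℕ) := Matrix (Fin n) (Fin n) ℂ

/-- Linear maps between matrix algebras. -/
abbrev MMap (m n : ℕ) := Mat m →ₗ[ℂ] Mat n

/-- The bilinear pairing `⟨a,b⟩ = Tr(aᵀ b)`. -/
noncomputable def mpair {ι : Type*} [Fintype ι] (x y : Matrix ι ι ℂ) : ℂ :=
  (xᵀ * y).trace

/-- The Choi matrix `C_φ = Σ_{i,j} e_{ij} ⊗ φ(e_{ij})`. -/
noncomputable def choi {m n : ℕ} (φ : MMap m n) :
    Matrix (Fin m × Fin n) (Fin m × Fin n) ℂ :=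
  Matrix.of fun p q => φ (Matrix.single p.1 q.1 1) p.2 q.2

/-- The pairing on maps `⟨φ,ψ⟩ = ⟨C_φ, C_ψ⟩`. -/
noncomputable def mapPair {m n : ℕ} (φ ψ : MMap m n) : ℂ := mpair (choi φ) (choi ψ)

/-- The adjoint `φ*` with respect to the pairing `⟨a,b⟩ = Tr(aᵀ b)`:
it satisfies `⟨φ(a),b⟩ = ⟨a,φ*(b)⟩`. -/
noncomputable def adjMap {m n : ℕ} (φ : MMap m n) : MMap n m where
  toFun y := Matrix.of fun i j => mpair (φ (Matrix.single i j 1)) y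
  map_add' y z := by
    ext i j
    simp [mpair, Matrix.mul_add]
  map_smul' c y := by
    ext i j
    simp [mpair, Matrix.mul_smul]

/-- Hermitian-preserving maps: `φ(a*) = φ(a)*`. -/
def IsHermP {m n : ℕ} (φ : MMap m n) : Prop := ∀ x : Mat m, φ xᴴ = (φ x)ᴴ

/-- The real vector space `H(M_A,M_B)` of Hermitian-preserving maps, as a set. -/
def HermSet (m n : ℕ) : Set (MMap m n) := {φ | IsHermP φ}

/-- Positive maps: mapping positive semidefinite matrices to positive semidefinite ones. -/
def IsPosMap {m n : ℕ} (φ : MMap m n) : Prop :=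
  ∀ x : Mat m, x.PosSemidef → (φ x).PosSemidef

/-- Completely positive maps: those whose Choi matrix is positive semidefinite. -/
def IsCP {m n : ℕ} (φ : MMap m n) : Prop := (choi φ).PosSemidef

/-- The cone `CP` of completely positive maps. -/
def CPset (m n : ℕ) : Set (MMap m n) := {φ | IsCP φ}

/-- `K₁ ∘ K₀ = {φ₁ ∘ φ₀ : φ₁ ∈ K₁, φ₀ ∈ K₀}`. -/
def compSet {m n p : ℕ} (K1 : Set (MMap n p)) (K0 : Set (MMap m n)) : Set (MMap m p) :=
  {χ | ∃ φ₁ ∈ K1, ∃ φ₀ ∈ K0, χ = φ₁ ∘ₗ φ₀}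

/-- `K₂ ∘ K₁ ∘ K₀ = {φ₂ ∘ φ₁ ∘ φ₀ : φᵢ ∈ Kᵢ}`. -/
def comp3 {m n p q : ℕ} (K2 : Set (MMap p q)) (K1 : Set (MMap n p)) (K0 : Set (MMap m n)) :
    Set (MMap m q) :=
  {χ | ∃ φ₂ ∈ K2, ∃ φ₁ ∈ K1, ∃ φ₀ ∈ K0, χ = φ₂ ∘ₗ φ₁ ∘ₗ φ₀}

/-- The dual cone `K° = {ψ ∈ H(M_A,M_B) : ⟨φ,ψ⟩ ≥ 0 for all φ ∈ K}`. -/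
def dualCone {m n : ℕ} (K : Set (MMap m n)) : Set (MMap m n) :=
  {ψ | IsHermP ψ ∧ ∀ φ ∈ K, 0 ≤ mapPair φ ψ}

/-- `K* = {φ* : φ ∈ K}`. -/
noncomputable def starSet {m n : ℕ} (K : Set (MMap m n)) : Set (MMap n m) := adjMap '' K

/-- `K^⊳ = (K ∘ CP_A)°`. -/
def rdualSet {m n : ℕ} (K : Set (MMap m n)) : Set (MMap m n) :=
  dualCone (compSet K (CPset m m))

/-- `K^⊲ = (CP_B ∘ K)°`. -/
def ldualSet {m n : ℕ} (K : Set (MMap m n)) : Set (MMap m n) :=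
  dualCone (compSet (CPset n n) K)

/-- A convex cone of maps: closed under addition and nonnegative real scaling. -/
def IsConeSet {m n : ℕ} (K : Set (MMap m n)) : Prop :=
  (∀ φ ∈ K, ∀ ψ ∈ K, φ + ψ ∈ K) ∧ (∀ φ ∈ K, ∀ r : ℝ, 0 ≤ r → (r : ℂ) • φ ∈ K)

/-- A closed convex cone of maps (closedness via the Choi isomorphism). -/
def IsClosedConeSet {m n : ℕ} (K : Set (MMap m n)) : Prop :=
  IsConeSet K ∧ IsClosed (choi '' K)

/-- Ampliation `1_Z ⊗ σ : M_Z ⊗ M_X → M_Z ⊗ M_Y`. -/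
def idTensor {z x y : ℕ} (σ : MMap x y)
    (M : Matrix (Fin z × Fin x) (Fin z × Fin x) ℂ) :
    Matrix (Fin z × Fin y) (Fin z × Fin y) ℂ :=
  Matrix.of fun p q => σ (Matrix.of fun k l => M (p.1, k) (q.1, l)) p.2 q.2

/-- Ampliation `σ ⊗ 1_Z : M_X ⊗ M_Z → M_Y ⊗ M_Z`. -/
def tensorId {x y z : ℕ} (σ : MMap x y)
    (M : Matrix (Fin x × Fin z) (Fin x × Fin z) ℂ) :
    Matrix (Fin y × Fin z) (Fin y × Fin z) ℂ :=
  Matrix.of fun p q => σ (Matrix.of fun i j => M (i, p.2) (j, q.2)) p.1 q.1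

/-- `S_1`: the closed convex cone generated by `x ⊗ y` with `x, y` positive semidefinite. -/
def SepCone (m n : ℕ) : Set (Matrix (Fin m × Fin n) (Fin m × Fin n) ℂ) :=
  closure {X | ∃ (r : ℕ) (x : Fin r → Mat m) (y : Fin r → Mat n),
    (∀ i, (x i).PosSemidef ∧ (y i).PosSemidef) ∧ X = ∑ i, x i ⊗ₖ y i}

/-- `SP_1`: Hermitian-preserving maps with separable Choi matrix. -/
def SP1set (m n : ℕ) : Set (MMap m n) := {φ | IsHermP φ ∧ choi φ ∈ SepCone m n}


/-- Vectors of Schmidt rank at most `k`. -/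
def SchmidtRankLE (k : ℕ) {m n : ℕ} (ξ : Fin m × Fin n → ℂ) : Prop :=
  ∃ (u : Fin k → Fin m → ℂ) (v : Fin k → Fin n → ℂ),
    ξ = fun p => ∑ i, u i p.1 * v i p.2

/-- `k`-blockpositive matrices: `⟨Y, |ξ⟩⟨ξ|⟩ ≥ 0` for every `ξ` of Schmidt rank at most `k`. -/
def BlockPos (k : ℕ) {m n : ℕ} (Y : Matrix (Fin m × Fin n) (Fin m × Fin n) ℂ) : Prop :=
  ∀ ξ : Fin m × Fin n → ℂ, SchmidtRankLE k ξ →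
    0 ≤ mpair Y (Matrix.of fun p q => ξ p * star (ξ q))

/-- `S_k`: the closed convex cone generated by `|ξ⟩⟨ξ|` for `ξ` of Schmidt rank at most `k`. -/
def SchmidtCone (k m n : ℕ) : Set (Matrix (Fin m × Fin n) (Fin m × Fin n) ℂ) :=
  closure {X | ∃ (r : ℕ) (ξ : Fin r → Fin m × Fin n → ℂ),
    (∀ i, SchmidtRankLE k (ξ i)) ∧
    X = ∑ i, Matrix.of fun p q => ξ i p * star (ξ i q)}

/-- `k`-positive maps: the ampliation `1_{M_k} ⊗ φ` is a positive map. -/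
def IsKPos (k : ℕ) {m n : ℕ} (φ : MMap m n) : Prop :=
  ∀ X : Matrix (Fin k × Fin m) (Fin k × Fin m) ℂ, X.PosSemidef → (idTensor φ X).PosSemidef

/-- The transpose map as a linear map. -/
def tmap (m : ℕ) : MMap m m where
  toFun x := xᵀ
  map_add' x y := by simp [Matrix.transpose_add]
  map_smul' c x := by simp [Matrix.transpose_smul]

/-- Completely copositive maps: `CCP = {φ ∘ t : φ ∈ CP}`. -/
def CCPset (m : ℕ) : Set (MMap m m) := {χ | ∃ φ, IsCP φ ∧ χ = φ ∘ₗ tmap m}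

/-- PPT maps: `PPT = CP ∩ CCP`. -/
def PPTset (m : ℕ) : Set (MMap m m) := CPset m m ∩ CCPset m

/-- Decomposable maps: the convex hull of `CP` and `CCP`. -/
noncomputable def DECset (m : ℕ) : Set (MMap m m) := convexHull ℝ (CPset m m ∪ CCPset m)

/-- The cone `P_1` of positive maps. -/
def P1set (m n : ℕ) : Set (MMap m n) := {φ | IsPosMap φ}

/-- A right-mapping cone: a closed convex cone of positive (Hermitian-preserving) maps `L`
with `L ∘ CP_A ⊆ L`. -/
def IsRMC {m n : ℕ} (L : Set (MMap m n)) : Prop :=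
  L ⊆ HermSet m n ∧ (∀ φ ∈ L, IsPosMap φ) ∧ IsClosedConeSet L ∧
    compSet L (CPset m m) ⊆ L

/-- A left-mapping cone: a closed convex cone of positive (Hermitian-preserving) maps `L`
with `CP_B ∘ L ⊆ L`. -/
def IsLMC {m n : ℕ} (L : Set (MMap m n)) : Prop :=
  L ⊆ HermSet m n ∧ (∀ φ ∈ L, IsPosMap φ) ∧ IsClosedConeSet L ∧
    compSet (CPset n n) L ⊆ L


set_option linter.unusedSectionVars false
set_option maxHeartbeats 1000000

namespace S18
variable {ι κ : Type*} [Fintype ι] [Fintype κ] [DecidableEq ι] [DecidableEq κ]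

lemma mpair_eq_sum (x y : Matrix ι ι ℂ) : mpair x y = ∑ p, ∑ q, x p q * y p q := by
  simp only [mpair, Matrix.trace, Matrix.diag, Matrix.mul_apply, Matrix.transpose_apply]
  exact Finset.sum_comm

lemma dot_eq_sum (M : Matrix ι ι ℂ) (w : ι → ℂ) :
    star w ⬝ᵥ M *ᵥ w = ∑ p, ∑ q, (starRingEnd ℂ) (w p) * M p q * w q := by
  simp [dotProduct, Matrix.mulVec, Finset.mul_sum, mul_assoc]

lemma outerPSD (w : ι → ℂ) :
    (Matrix.of fun k l => (starRingEnd ℂ) (w k) * w l).PosSemidef := by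
  have h : (Matrix.of fun k l => (starRingEnd ℂ) (w k) * w l) =
      (Matrix.of fun (_ : Fin 1) k => w k)ᴴ * (Matrix.of fun (_ : Fin 1) k => w k) := by
    ext k l
    simp [Matrix.mul_apply, Matrix.conjTranspose_apply]
  rw [h]
  exact Matrix.posSemidef_conjTranspose_mul_self _

lemma isClosed_nonnegC : IsClosed {z : ℂ | 0 ≤ z} := by
  have h : {z : ℂ | 0 ≤ z} = Complex.re ⁻¹' Set.Ici 0 ∩ Complex.im ⁻¹' {0} := by
    ext z
    simp [Complex.le_def, eq_comm]
  rw [h]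
  exact (isClosed_Ici.preimage Complex.continuous_re).inter
    (isClosed_singleton.preimage Complex.continuous_im)

lemma psd_isClosed : IsClosed {M : Matrix ι ι ℂ | M.PosSemidef} := by
  have h : {M : Matrix ι ι ℂ | M.PosSemidef} =
      {M : Matrix ι ι ℂ | Mᴴ = M} ∩
        ⋂ w : ι → ℂ, (fun M : Matrix ι ι ℂ => star w ⬝ᵥ M *ᵥ w) ⁻¹' {z | 0 ≤ z} := by
    ext M
    simp only [Set.mem_setOf_eq, Set.mem_inter_iff, Set.mem_iInter, Set.mem_preimage]
    exact Matrix.posSemidef_iff_dotProduct_mulVec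
  rw [h]
  refine IsClosed.inter (isClosed_eq (Continuous.matrix_conjTranspose continuous_id) continuous_id)
    (isClosed_iInter fun w => IsClosed.preimage ?_ isClosed_nonnegC)
  have hc : Continuous fun M : Matrix ι ι ℂ => ∑ p, ∑ q, (starRingEnd ℂ) (w p) * M p q * w q := by
    refine continuous_finset_sum _ fun p _ => continuous_finset_sum _ fun q _ => ?_
    have hpq : Continuous fun M : Matrix ι ι ℂ => M p q :=
      (continuous_apply q).comp (continuous_apply p)
    exact (continuous_const.mul hpq).mul continuous_const
  have he : (fun M : Matrix ι ι ℂ => star w ⬝ᵥ M *ᵥ w)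
      = fun M => ∑ p, ∑ q, (starRingEnd ℂ) (w p) * M p q * w q := by
    funext M; exact dot_eq_sum M w
  rw [he]; exact hc

lemma psd_smul {M : Matrix ι ι ℂ} (hM : M.PosSemidef) {r : ℝ} (hr : 0 ≤ r) :
    ((r : ℂ) • M).PosSemidef := by
  refine Matrix.PosSemidef.of_dotProduct_mulVec_nonneg ?_ fun x => ?_
  · show ((r : ℂ) • M)ᴴ = (r : ℂ) • M
    rw [Matrix.conjTranspose_smul, hM.1.eq]
    simp [Complex.conj_ofReal]
  · rw [Matrix.smul_mulVec, dotProduct_smul, smul_eq_mul]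
    exact mul_nonneg (Complex.zero_le_real.2 hr) (hM.dotProduct_mulVec_nonneg x)

lemma psd_trace_nonneg {M : Matrix ι ι ℂ} (hM : M.PosSemidef) : 0 ≤ M.trace := by
  refine Finset.sum_nonneg fun i _ => ?_
  have := hM.dotProduct_mulVec_nonneg (Pi.single i 1)
  simpa [Matrix.mulVec_single, dotProduct, Pi.single_apply] using this

lemma psd_eq_conj_mul {Q : Matrix ι ι ℂ} (hQ : Q.PosSemidef) : ∃ B : Matrix ι ι ℂ, Q = Bᴴ * B := by
  open scoped MatrixOrder in
  obtain ⟨B, hB⟩ := CStarAlgebra.nonneg_iff_eq_star_mul_self.mp hQ.nonneg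
  exact ⟨B, by rw [hB, Matrix.star_eq_conjTranspose]⟩

lemma mpair_psd_nonneg {P Q : Matrix ι ι ℂ} (hP : P.PosSemidef) (hQ : Q.PosSemidef) :
    0 ≤ mpair P Q := by
  obtain ⟨B, rfl⟩ := psd_eq_conj_mul hQ
  have h1 : mpair P (Bᴴ * B) = (B * Pᵀ * Bᴴ).trace := by
    rw [mpair, ← Matrix.mul_assoc, Matrix.trace_mul_comm, ← Matrix.mul_assoc]
  rw [h1]
  exact psd_trace_nonneg (hP.transpose.mul_mul_conjTranspose_same B)

lemma kron_psd {x : Matrix ι ι ℂ} {y : Matrix κ κ ℂ} (hx : x.PosSemidef) (hy : y.PosSemidef) :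
    (x ⊗ₖ y).PosSemidef := by
  obtain ⟨A, rfl⟩ := psd_eq_conj_mul hx
  obtain ⟨B, rfl⟩ := psd_eq_conj_mul hy
  rw [Matrix.mul_kronecker_mul]
  have h : (Aᴴ ⊗ₖ Bᴴ) = (A ⊗ₖ B)ᴴ := by
    ext p q
    simp [Matrix.conjTranspose_apply]
  rw [h]
  exact Matrix.posSemidef_conjTranspose_mul_self _


-- expansion of a map entrywise over the standard basis
lemma map_entry_expand {m n : ℕ} (φ : MMap m n) (N : Mat m) (s t : Fin n) :
    φ N s t = ∑ k, ∑ l, N k l * φ (Matrix.single k l 1) s t := by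
  conv_lhs => rw [Matrix.matrix_eq_sum_single N]
  rw [map_sum, Matrix.sum_apply]
  refine Finset.sum_congr rfl fun k _ => ?_
  rw [map_sum, Matrix.sum_apply]
  refine Finset.sum_congr rfl fun l _ => ?_
  have h : Matrix.single k l (N k l) = N k l • Matrix.single k l 1 := by
    ext i j
    simp [Matrix.single]
  rw [h, _root_.map_smul, Matrix.smul_apply, smul_eq_mul]

end S18
namespace S18b

open S18

lemma sum_swap4 {α β γ δ : Type*} [Fintype α] [Fintype β] [Fintype γ] [Fintype δ]
    (f : α → β → γ → δ → ℂ) :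
    ∑ k : γ, ∑ l : δ, ∑ i : α, ∑ j : β, f i j k l = ∑ i, ∑ k, ∑ j, ∑ l, f i j k l :=
  calc ∑ k : γ, ∑ l : δ, ∑ i : α, ∑ j : β, f i j k l
      = ∑ k : γ, ∑ i : α, ∑ l : δ, ∑ j : β, f i j k l :=
        Finset.sum_congr rfl fun _ _ => Finset.sum_comm
    _ = ∑ i : α, ∑ k : γ, ∑ l : δ, ∑ j : β, f i j k l := Finset.sum_comm
    _ = ∑ i, ∑ k, ∑ j, ∑ l, f i j k l :=
        Finset.sum_congr rfl fun _ _ => Finset.sum_congr rfl fun _ _ => Finset.sum_comm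

lemma sum_swap4' {α β γ δ : Type*} [Fintype α] [Fintype β] [Fintype γ] [Fintype δ]
    (f : α → β → γ → δ → ℂ) :
    ∑ k : γ, ∑ l : δ, ∑ i : α, ∑ j : β, f i j k l = ∑ i, ∑ j, ∑ k, ∑ l, f i j k l :=
  calc ∑ k : γ, ∑ l : δ, ∑ i : α, ∑ j : β, f i j k l
      = ∑ i, ∑ k, ∑ j, ∑ l, f i j k l := sum_swap4 f
    _ = ∑ i, ∑ j, ∑ k, ∑ l, f i j k l :=
        Finset.sum_congr rfl fun _ _ => Finset.sum_comm

lemma mpair_kron {m n : ℕ} (Y : Matrix (Fin m × Fin n) (Fin m × Fin n) ℂ)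
    (x : Mat m) (y : Mat n) :
    mpair Y (x ⊗ₖ y) = ∑ i, ∑ k, ∑ j, ∑ l, Y (i, k) (j, l) * (x i j * y k l) := by
  rw [mpair_eq_sum, Fintype.sum_prod_type]
  refine Finset.sum_congr rfl fun i _ => Finset.sum_congr rfl fun k _ => ?_
  rw [Fintype.sum_prod_type]
  simp [Matrix.kroneckerMap_apply]

/-- every map sending Hermitians to Hermitians is Hermitian-preserving -/
lemma hermP_of_herm {m n : ℕ} {φ : MMap m n}
    (h : ∀ x : Mat m, x.IsHermitian → (φ x).IsHermitian) : IsHermP φ := by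
  intro x
  obtain ⟨H, K, hH, hK, hx, hxH⟩ : ∃ H K : Mat m, H.IsHermitian ∧ K.IsHermitian ∧
      x = H + Complex.I • K ∧ xᴴ = H - Complex.I • K := by
    refine ⟨(2⁻¹ : ℂ) • (x + xᴴ), (-(2⁻¹) * Complex.I) • (x - xᴴ), ?_, ?_, ?_, ?_⟩
    · show _ᴴ = _
      ext i j
      simp only [Matrix.conjTranspose_apply, Matrix.smul_apply, Matrix.add_apply, smul_eq_mul,
        Complex.star_def, _root_.map_mul, map_add, map_div₀, map_inv₀, map_ofNat, _root_.map_one,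
        Complex.conj_conj]
      ring
    · show _ᴴ = _
      ext i j
      simp only [Matrix.conjTranspose_apply, Matrix.smul_apply, Matrix.sub_apply, smul_eq_mul,
        Complex.star_def, _root_.map_mul, map_sub, map_neg, map_div₀, map_inv₀, map_ofNat, _root_.map_one,
        Complex.conj_I, Complex.conj_conj]
      ring
    · ext i j
      simp only [Matrix.add_apply, Matrix.smul_apply, Matrix.sub_apply,
        Matrix.conjTranspose_apply, smul_eq_mul, Complex.star_def]
      linear_combination (2⁻¹ * (x i j - (starRingEnd ℂ) (x j i))) * Complex.I_sq
    · ext i j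
      simp only [Matrix.add_apply, Matrix.smul_apply, Matrix.sub_apply,
        Matrix.conjTranspose_apply, smul_eq_mul, Complex.star_def]
      linear_combination (2⁻¹ * ((starRingEnd ℂ) (x j i) - x i j)) * Complex.I_sq
  have e1 : φ xᴴ = φ H - Complex.I • φ K := by
    rw [hxH, map_sub, LinearMap.map_smul]
  have e2 : (φ x)ᴴ = φ H - Complex.I • φ K := by
    conv_lhs => rw [hx]
    rw [map_add, LinearMap.map_smul, Matrix.conjTranspose_add, Matrix.conjTranspose_smul,
      (h H hH).eq, (h K hK).eq]
    simp only [Complex.star_def, Complex.conj_I, neg_smul]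
    rw [← sub_eq_add_neg]
  rw [e1, e2]

lemma herm_decomp {ι : Type*} [Fintype ι] [DecidableEq ι] {H : Matrix ι ι ℂ}
    (hH : H.IsHermitian) :
    ∃ P Q : Matrix ι ι ℂ, P.PosSemidef ∧ Q.PosSemidef ∧ H = P - Q := by
  classical
  set U : Matrix ι ι ℂ := (hH.eigenvectorUnitary : Matrix ι ι ℂ) with hU
  refine ⟨U * Matrix.diagonal (fun i => ((max (hH.eigenvalues i) 0 : ℝ) : ℂ)) * Uᴴ,
    U * Matrix.diagonal (fun i => ((max (-(hH.eigenvalues i)) 0 : ℝ) : ℂ)) * Uᴴ, ?_, ?_, ?_⟩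
  · exact (Matrix.PosSemidef.diagonal fun i => Complex.zero_le_real.2 (le_max_right _ _)
      ).mul_mul_conjTranspose_same U
  · exact (Matrix.PosSemidef.diagonal fun i => Complex.zero_le_real.2 (le_max_right _ _)
      ).mul_mul_conjTranspose_same U
  · have hd : Matrix.diagonal (fun i => ((max (hH.eigenvalues i) 0 : ℝ) : ℂ)) -
        Matrix.diagonal (fun i => ((max (-(hH.eigenvalues i)) 0 : ℝ) : ℂ))
        = Matrix.diagonal (RCLike.ofReal ∘ hH.eigenvalues) := by
      ext i j
      rcases eq_or_ne i j with rfl | hij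
      · simp only [Matrix.sub_apply, Matrix.diagonal_apply_eq, Function.comp_apply]
        rw [← Complex.ofReal_sub, max_zero_sub_max_neg_zero_eq_self]
        rfl
      · simp [Matrix.diagonal_apply_ne _ hij]
    rw [← Matrix.sub_mul, ← Matrix.mul_sub, hd, ← Matrix.star_eq_conjTranspose]
    exact hH.spectral_theorem

lemma posmap_herm {m n : ℕ} {φ : MMap m n} (hφ : IsPosMap φ) : IsHermP φ := by
  apply hermP_of_herm
  intro x hx
  obtain ⟨P, Q, hP, hQ, rfl⟩ := herm_decomp hx
  rw [map_sub]
  exact Matrix.IsHermitian.sub (hφ P hP).1 (hφ Q hQ).1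

end S18b
namespace S18c
open S18 S18b

lemma herm_apply {ι : Type*} [Fintype ι] {M : Matrix ι ι ℂ} (h : M.IsHermitian) (i j : ι) :
    (starRingEnd ℂ) (M i j) = M j i := by
  have := congrFun (congrFun h.eq j) i
  simpa [Matrix.conjTranspose_apply, Complex.star_def] using this

/-- The map associated to a Choi-type matrix. -/
noncomputable def mapOfMat {m n : ℕ} (Y : Matrix (Fin m × Fin n) (Fin m × Fin n) ℂ) :
    MMap m n where
  toFun x := Matrix.of fun k l => ∑ i, ∑ j, x i j * Y (i, k) (j, l)
  map_add' x y := by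
    ext k l
    simp [add_mul, Finset.sum_add_distrib]
  map_smul' c x := by
    ext k l
    simp [Finset.mul_sum, mul_assoc]

lemma mapOfMat_apply {m n : ℕ} (Y : Matrix (Fin m × Fin n) (Fin m × Fin n) ℂ) (x : Mat m)
    (k l : Fin n) : mapOfMat Y x k l = ∑ i, ∑ j, x i j * Y (i, k) (j, l) := rfl

lemma mapOfMat_choi {m n : ℕ} (φ : MMap m n) : mapOfMat (choi φ) = φ := by
  refine LinearMap.ext fun x => ?_
  ext k l
  rw [map_entry_expand φ x k l]
  rfl

lemma mapOfMat_pos {m n : ℕ} {Y : Matrix (Fin m × Fin n) (Fin m × Fin n) ℂ}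
    (hY : Y.IsHermitian)
    (hbp : ∀ (x : Mat m) (y : Mat n), x.PosSemidef → y.PosSemidef → 0 ≤ mpair Y (x ⊗ₖ y)) :
    IsPosMap (mapOfMat Y) := by
  intro x hx
  refine Matrix.PosSemidef.of_dotProduct_mulVec_nonneg ?_ ?_
  · show (mapOfMat Y x)ᴴ = mapOfMat Y x
    ext k l
    rw [Matrix.conjTranspose_apply, Complex.star_def]
    calc (starRingEnd ℂ) (mapOfMat Y x l k)
        = ∑ i, ∑ j, (starRingEnd ℂ) (x i j) * (starRingEnd ℂ) (Y (i, l) (j, k)) := by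
          rw [mapOfMat_apply, map_sum]
          exact Finset.sum_congr rfl fun i _ => by
            rw [map_sum]
            exact Finset.sum_congr rfl fun j _ => map_mul _ _ _
      _ = ∑ i, ∑ j, x j i * Y (j, k) (i, l) := by
          refine Finset.sum_congr rfl fun i _ => Finset.sum_congr rfl fun j _ => ?_
          rw [herm_apply hx.1, herm_apply hY]
      _ = ∑ j, ∑ i, x j i * Y (j, k) (i, l) := Finset.sum_comm
      _ = mapOfMat Y x k l := by rw [mapOfMat_apply]
  · intro w
    rw [dot_eq_sum]
    have rhs : mpair Y (x ⊗ₖ Matrix.of fun k l => (starRingEnd ℂ) (w k) * w l)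
        = ∑ i, ∑ k, ∑ j, ∑ l, Y (i, k) (j, l) * (x i j * ((starRingEnd ℂ) (w k) * w l)) := by
      rw [mpair_kron]
      simp only [Matrix.of_apply]
    have key : ∑ p, ∑ q, (starRingEnd ℂ) (w p) * mapOfMat Y x p q * w q
        = mpair Y (x ⊗ₖ Matrix.of fun k l => (starRingEnd ℂ) (w k) * w l) := by
      rw [rhs, ← sum_swap4 (fun i j k l => Y (i, k) (j, l) * (x i j * ((starRingEnd ℂ) (w k) * w l)))]
      refine Finset.sum_congr rfl fun k _ => Finset.sum_congr rfl fun l _ => ?_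
      rw [mapOfMat_apply, Finset.mul_sum, Finset.sum_mul]
      refine Finset.sum_congr rfl fun i _ => ?_
      rw [Finset.mul_sum, Finset.sum_mul]
      refine Finset.sum_congr rfl fun j _ => ?_
      ring
    rw [key]
    exact hbp x _ hx (outerPSD w)

lemma cp_pos {m n : ℕ} {ψ : MMap m n} (h : IsCP ψ) : IsPosMap ψ := by
  have h2 := mapOfMat_pos h.1 (fun x y hx hy => mpair_psd_nonneg h (kron_psd hx hy))
  rwa [mapOfMat_choi] at h2

lemma stdBasis_conjT {ι : Type*} [DecidableEq ι] (i j : ι) :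
    (Matrix.single i j (1 : ℂ))ᴴ = Matrix.single j i 1 := by
  ext s t
  simp [Matrix.conjTranspose_apply, Matrix.single, and_comm]

lemma adj_apply {m n : ℕ} (φ : MMap m n) (y : Mat n) (i j : Fin m) :
    adjMap φ y i j = mpair (φ (Matrix.single i j 1)) y := rfl

lemma adj_pos {m n : ℕ} {σ : MMap m n} (hσ : IsPosMap σ) : IsPosMap (adjMap σ) := by
  have hherm := posmap_herm hσ
  intro y hy
  refine Matrix.PosSemidef.of_dotProduct_mulVec_nonneg ?_ ?_
  · show (adjMap σ y)ᴴ = adjMap σ y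
    ext i j
    rw [Matrix.conjTranspose_apply, Complex.star_def, adj_apply, adj_apply,
      mpair_eq_sum, mpair_eq_sum]
    calc (starRingEnd ℂ) (∑ s, ∑ t, σ (Matrix.single j i 1) s t * y s t)
        = ∑ s, ∑ t, (starRingEnd ℂ) (σ (Matrix.single j i 1) s t)
            * (starRingEnd ℂ) (y s t) := by
          rw [map_sum]
          exact Finset.sum_congr rfl fun s _ => by
            rw [map_sum]
            exact Finset.sum_congr rfl fun t _ => map_mul _ _ _
      _ = ∑ s, ∑ t, σ (Matrix.single i j 1) t s * y t s := by
          refine Finset.sum_congr rfl fun s _ => Finset.sum_congr rfl fun t _ => ?_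
          congr 1
          · have h1 : (starRingEnd ℂ) (σ (Matrix.single j i 1) s t)
                = (σ (Matrix.single j i 1))ᴴ t s := by
              simp [Matrix.conjTranspose_apply, Complex.star_def]
            rw [h1, ← hherm, stdBasis_conjT]
          · exact herm_apply hy.1 s t
      _ = ∑ t, ∑ s, σ (Matrix.single i j 1) t s * y t s := Finset.sum_comm
      _ = ∑ s, ∑ t, σ (Matrix.single i j 1) s t * y s t := rfl
  · intro w
    rw [dot_eq_sum]
    have key : ∑ p, ∑ q, (starRingEnd ℂ) (w p) * adjMap σ y p q * w q
        = mpair (σ (Matrix.of fun i j => (starRingEnd ℂ) (w i) * w j)) y := by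
      rw [mpair_eq_sum]
      have rhs : ∀ s t, σ (Matrix.of fun i j => (starRingEnd ℂ) (w i) * w j) s t * y s t
          = ∑ i, ∑ j, ((starRingEnd ℂ) (w i) * w j * σ (Matrix.single i j 1) s t)
            * y s t := by
        intro s t
        rw [map_entry_expand σ _ s t, Finset.sum_mul]
        refine Finset.sum_congr rfl fun i _ => ?_
        rw [Finset.sum_mul]
        refine Finset.sum_congr rfl fun j _ => ?_
        simp only [Matrix.of_apply]
      calc ∑ p, ∑ q, (starRingEnd ℂ) (w p) * adjMap σ y p q * w q
          = ∑ s, ∑ t, ∑ i, ∑ j, ((starRingEnd ℂ) (w i) * w j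
              * σ (Matrix.single i j 1) s t) * y s t := by
            rw [sum_swap4' (fun i j s t => ((starRingEnd ℂ) (w i) * w j
              * σ (Matrix.single i j 1) s t) * y s t)]
            refine Finset.sum_congr rfl fun i _ => Finset.sum_congr rfl fun j _ => ?_
            rw [adj_apply, mpair_eq_sum, Finset.mul_sum, Finset.sum_mul]
            refine Finset.sum_congr rfl fun s _ => ?_
            rw [Finset.mul_sum, Finset.sum_mul]
            refine Finset.sum_congr rfl fun t _ => ?_
            ring
        _ = ∑ s, ∑ t, σ (Matrix.of fun i j => (starRingEnd ℂ) (w i) * w j) s t * y s t := by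
            refine Finset.sum_congr rfl fun s _ => Finset.sum_congr rfl fun t _ => ?_
            rw [rhs s t]
    rw [key]
    exact mpair_psd_nonneg (hσ _ (outerPSD w)) hy

end S18c
namespace S18d
open S18 S18b S18c

lemma idTensor_kron {z x y : ℕ} (φ : MMap x y) (A : Mat z) (B : Mat x) :
    idTensor φ (A ⊗ₖ B) = A ⊗ₖ (φ B) := by
  ext p q
  show φ (Matrix.of fun k l => (A ⊗ₖ B) (p.1, k) (q.1, l)) p.2 q.2 = (A ⊗ₖ φ B) p q
  have h : (Matrix.of fun k l => (A ⊗ₖ B) (p.1, k) (q.1, l)) = A p.1 q.1 • B := by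
    ext k l
    simp [Matrix.kroneckerMap_apply, smul_eq_mul]
  rw [h, LinearMap.map_smul, Matrix.smul_apply, smul_eq_mul]
  rfl

lemma tensorId_kron {x y z : ℕ} (φ : MMap x y) (A : Mat x) (B : Mat z) :
    tensorId φ (A ⊗ₖ B) = (φ A) ⊗ₖ B := by
  ext p q
  show φ (Matrix.of fun i j => (A ⊗ₖ B) (i, p.2) (j, q.2)) p.1 q.1 = ((φ A) ⊗ₖ B) p q
  have h : (Matrix.of fun i j => (A ⊗ₖ B) (i, p.2) (j, q.2)) = B p.2 q.2 • A := by
    ext i j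
    simp [Matrix.kroneckerMap_apply, smul_eq_mul, mul_comm]
  rw [h, LinearMap.map_smul, Matrix.smul_apply, smul_eq_mul]
  show B p.2 q.2 * φ A p.1 q.1 = φ A p.1 q.1 * B p.2 q.2
  ring

lemma idTensor_sum {z x y : ℕ} (φ : MMap x y) {r : ℕ}
    (f : Fin r → Matrix (Fin z × Fin x) (Fin z × Fin x) ℂ) :
    idTensor φ (∑ i, f i) = ∑ i, idTensor φ (f i) := by
  ext p q
  have h : (Matrix.of fun k l => (∑ i, f i) (p.1, k) (q.1, l))
      = ∑ i, (Matrix.of fun k l => f i (p.1, k) (q.1, l)) := by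
    ext k l
    simp [Matrix.sum_apply]
  show φ (Matrix.of fun k l => (∑ i, f i) (p.1, k) (q.1, l)) p.2 q.2 = _
  rw [h, map_sum, Matrix.sum_apply, Matrix.sum_apply]
  rfl

lemma tensorId_sum {x y z : ℕ} (φ : MMap x y) {r : ℕ}
    (f : Fin r → Matrix (Fin x × Fin z) (Fin x × Fin z) ℂ) :
    tensorId φ (∑ i, f i) = ∑ i, tensorId φ (f i) := by
  ext p q
  have h : (Matrix.of fun i j => (∑ i, f i) (i, p.2) (j, q.2))
      = ∑ i, (Matrix.of fun s t => f i (s, p.2) (t, q.2)) := by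
    ext s t
    simp [Matrix.sum_apply]
  show φ (Matrix.of fun i j => (∑ i, f i) (i, p.2) (j, q.2)) p.1 q.1 = _
  rw [h, map_sum, Matrix.sum_apply, Matrix.sum_apply]
  rfl

lemma idTensor_cont {z x y : ℕ} (φ : MMap x y) :
    Continuous (idTensor (z := z) φ) := by
  apply continuous_matrix
  intro p q
  have he : (fun M : Matrix (Fin z × Fin x) (Fin z × Fin x) ℂ => idTensor φ M p q)
      = fun M => ∑ k, ∑ l, M (p.1, k) (q.1, l)
          * φ (Matrix.single k l 1) p.2 q.2 := by
    funext M
    exact map_entry_expand φ _ p.2 q.2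
  rw [he]
  refine continuous_finset_sum _ fun k _ => continuous_finset_sum _ fun l _ => ?_
  have hc : Continuous fun M : Matrix (Fin z × Fin x) (Fin z × Fin x) ℂ => M (p.1, k) (q.1, l) :=
    (continuous_apply _).comp (continuous_apply _)
  exact hc.mul continuous_const

lemma tensorId_cont {x y z : ℕ} (φ : MMap x y) :
    Continuous (tensorId (z := z) φ) := by
  apply continuous_matrix
  intro p q
  have he : (fun M : Matrix (Fin x × Fin z) (Fin x × Fin z) ℂ => tensorId φ M p q)
      = fun M => ∑ k, ∑ l, M (k, p.2) (l, q.2)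
          * φ (Matrix.single k l 1) p.1 q.1 := by
    funext M
    exact map_entry_expand φ _ p.1 q.1
  rw [he]
  refine continuous_finset_sum _ fun k _ => continuous_finset_sum _ fun l _ => ?_
  have hc : Continuous fun M : Matrix (Fin x × Fin z) (Fin x × Fin z) ℂ => M (k, p.2) (l, q.2) :=
    (continuous_apply _).comp (continuous_apply _)
  exact hc.mul continuous_const

/-- swapping the two tensor factors -/
def swapM {m n : ℕ} (M : Matrix (Fin m × Fin n) (Fin m × Fin n) ℂ) :
    Matrix (Fin n × Fin m) (Fin n × Fin m) ℂ :=
  Matrix.of fun p q => M (p.2, p.1) (q.2, q.1)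

lemma swapM_swapM {m n : ℕ} (M : Matrix (Fin m × Fin n) (Fin m × Fin n) ℂ) :
    swapM (swapM M) = M := rfl

lemma swapM_kron {m n : ℕ} (x : Mat m) (y : Mat n) : swapM (x ⊗ₖ y) = y ⊗ₖ x := by
  ext p q
  simp [swapM, Matrix.kroneckerMap_apply, mul_comm]

lemma swapM_sum {m n : ℕ} {r : ℕ} (f : Fin r → Matrix (Fin m × Fin n) (Fin m × Fin n) ℂ) :
    swapM (∑ i, f i) = ∑ i, swapM (f i) := by
  ext p q
  simp [swapM, Matrix.sum_apply]

lemma swapM_cont {m n : ℕ} : Continuous (swapM (m := m) (n := n)) := by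
  apply continuous_matrix
  intro p q
  show Continuous fun M : Matrix (Fin m × Fin n) (Fin m × Fin n) ℂ => M (p.2, p.1) (q.2, q.1)
  exact (continuous_apply _).comp (continuous_apply _)

lemma swapM_psd {m n : ℕ} {M : Matrix (Fin m × Fin n) (Fin m × Fin n) ℂ}
    (hM : M.PosSemidef) : (swapM M).PosSemidef := by
  refine Matrix.PosSemidef.of_dotProduct_mulVec_nonneg ?_ ?_
  · show (swapM M)ᴴ = swapM M
    ext p q
    rw [Matrix.conjTranspose_apply]
    show star (M (q.2, q.1) (p.2, p.1)) = M (p.2, p.1) (q.2, q.1)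
    rw [Complex.star_def, herm_apply hM.1]
  · intro w
    have h := hM.dotProduct_mulVec_nonneg (fun p => w (p.2, p.1))
    rw [dot_eq_sum] at h ⊢
    rw [show ∑ p, ∑ q, (starRingEnd ℂ) (w p) * swapM M p q * w q
        = ∑ p : Fin m × Fin n, ∑ q : Fin m × Fin n,
          (starRingEnd ℂ) (w (p.2, p.1)) * M p q * w (q.2, q.1) from ?_]
    · exact h
    · refine Fintype.sum_equiv (Equiv.prodComm (Fin n) (Fin m)) _ _ fun p => ?_
      refine Fintype.sum_equiv (Equiv.prodComm (Fin n) (Fin m)) _ _ fun q => ?_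
      rfl

lemma idTensor_swapM {m n y : ℕ} (φ : MMap m y) (ρ : Matrix (Fin m × Fin n) (Fin m × Fin n) ℂ) :
    idTensor φ (swapM ρ) = swapM (tensorId φ ρ) := rfl

end S18d
namespace S18e
open S18 S18b S18c S18d

def sepGen (m n : ℕ) : Set (Matrix (Fin m × Fin n) (Fin m × Fin n) ℂ) :=
  {X | ∃ (r : ℕ) (x : Fin r → Mat m) (y : Fin r → Mat n),
    (∀ i, (x i).PosSemidef ∧ (y i).PosSemidef) ∧ X = ∑ i, x i ⊗ₖ y i}

lemma sepCone_eq (m n : ℕ) : SepCone m n = closure (sepGen m n) := rfl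

lemma sepGen_zero (m n : ℕ) : (0 : Matrix (Fin m × Fin n) (Fin m × Fin n) ℂ) ∈ sepGen m n :=
  ⟨0, Fin.elim0, Fin.elim0, fun i => i.elim0, by simp⟩

lemma sepGen_kron {m n : ℕ} {x : Mat m} {y : Mat n} (hx : x.PosSemidef) (hy : y.PosSemidef) :
    x ⊗ₖ y ∈ sepGen m n :=
  ⟨1, fun _ => x, fun _ => y, fun _ => ⟨hx, hy⟩, by simp⟩

lemma sepGen_add {m n : ℕ} {X Y : Matrix (Fin m × Fin n) (Fin m × Fin n) ℂ}
    (hX : X ∈ sepGen m n) (hY : Y ∈ sepGen m n) : X + Y ∈ sepGen m n := by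
  obtain ⟨r1, x1, y1, h1, rfl⟩ := hX
  obtain ⟨r2, x2, y2, h2, rfl⟩ := hY
  refine ⟨r1 + r2, Fin.append x1 x2, Fin.append y1 y2, ?_, ?_⟩
  · intro i
    refine Fin.addCases (fun j => ?_) (fun j => ?_) i
    · simpa [Fin.append_left] using h1 j
    · simpa [Fin.append_right] using h2 j
  · rw [Fin.sum_univ_add]
    congr 1
    · exact Finset.sum_congr rfl fun j _ => by simp [Fin.append_left]
    · exact Finset.sum_congr rfl fun j _ => by simp [Fin.append_right]

lemma sepGen_smul {m n : ℕ} {X : Matrix (Fin m × Fin n) (Fin m × Fin n) ℂ}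
    (hX : X ∈ sepGen m n) {r : ℝ} (hr : 0 ≤ r) : r • X ∈ sepGen m n := by
  obtain ⟨r0, x, y, h, rfl⟩ := hX
  refine ⟨r0, fun i => (r : ℂ) • x i, y, fun i => ⟨psd_smul (h i).1 hr, (h i).2⟩, ?_⟩
  rw [Finset.smul_sum]
  refine Finset.sum_congr rfl fun i _ => ?_
  ext p q
  show r • (x i ⊗ₖ y i) p q = _
  simp only [Matrix.smul_apply, Matrix.kroneckerMap_apply, Matrix.of_apply,
    Complex.real_smul, smul_eq_mul]
  ring

lemma sepGen_psd {m n : ℕ} {X : Matrix (Fin m × Fin n) (Fin m × Fin n) ℂ}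
    (hX : X ∈ sepGen m n) : X.PosSemidef := by
  obtain ⟨r, x, y, h, rfl⟩ := hX
  exact Finset.sum_induction _ _ (fun A B hA hB => hA.add hB) Matrix.PosSemidef.zero
    (fun i _ => kron_psd (h i).1 (h i).2)

lemma sepCone_convex (m n : ℕ) : Convex ℝ (SepCone m n) := by
  rw [sepCone_eq]
  refine Convex.closure ?_
  intro X hX Y hY a b ha hb _
  exact sepGen_add (sepGen_smul hX ha) (sepGen_smul hY hb)

lemma closure_op {α β : Type*} [TopologicalSpace α] [TopologicalSpace β]
    {T : α → β} (hT : Continuous T) {S : Set α} {C : Set β}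
    (hmaps : ∀ X ∈ S, T X ∈ C) (hC : IsClosed C) {ρ : α} (hρ : ρ ∈ closure S) : T ρ ∈ C := by
  have h1 : T ρ ∈ closure (T '' S) := image_closure_subset_closure_image hT ⟨ρ, hρ, rfl⟩
  exact closure_minimal (by rintro _ ⟨X, hX, rfl⟩; exact hmaps X hX) hC h1

lemma sepCone_smul {m n : ℕ} {X : Matrix (Fin m × Fin n) (Fin m × Fin n) ℂ}
    (hX : X ∈ SepCone m n) {r : ℝ} (hr : 0 ≤ r) : r • X ∈ SepCone m n := by
  rw [sepCone_eq] at hX ⊢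
  exact closure_op (continuous_const_smul r)
    (fun Z hZ => subset_closure (sepGen_smul hZ hr)) isClosed_closure hX

lemma sepCone_swap {m n : ℕ} {X : Matrix (Fin m × Fin n) (Fin m × Fin n) ℂ}
    (hX : X ∈ SepCone m n) : swapM X ∈ SepCone n m := by
  rw [sepCone_eq] at hX ⊢
  refine closure_op swapM_cont (fun Z hZ => subset_closure ?_) isClosed_closure hX
  obtain ⟨r, x, y, h, rfl⟩ := hZ
  rw [swapM_sum]
  exact ⟨r, y, x, fun i => ⟨(h i).2, (h i).1⟩,
    Finset.sum_congr rfl fun i _ => (swapM_kron (x i) (y i))⟩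

-- forward directions
lemma fwd1 {a : ℕ} {ρ : Matrix (Fin a × Fin a) (Fin a × Fin a) ℂ} (hρ : ρ ∈ SepCone a a)
    {ψ : MMap a a} (hψ : IsCP ψ) : tensorId ψ ρ ∈ SepCone a a := by
  rw [sepCone_eq] at hρ ⊢
  refine closure_op (tensorId_cont ψ) (fun X hX => subset_closure ?_) isClosed_closure hρ
  obtain ⟨r, x, y, h, rfl⟩ := hX
  rw [tensorId_sum]
  exact ⟨r, fun i => ψ (x i), y, fun i => ⟨cp_pos hψ _ (h i).1, (h i).2⟩,
    Finset.sum_congr rfl fun i _ => tensorId_kron ψ (x i) (y i)⟩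

lemma fwd3 {a : ℕ} {ρ : Matrix (Fin a × Fin a) (Fin a × Fin a) ℂ} (hρ : ρ ∈ SepCone a a)
    {ψ : MMap a a} (hψ : IsCP ψ) : idTensor ψ ρ ∈ SepCone a a := by
  rw [sepCone_eq] at hρ ⊢
  refine closure_op (idTensor_cont ψ) (fun X hX => subset_closure ?_) isClosed_closure hρ
  obtain ⟨r, x, y, h, rfl⟩ := hX
  rw [idTensor_sum]
  exact ⟨r, x, fun i => ψ (y i), fun i => ⟨(h i).1, cp_pos hψ _ (h i).2⟩,
    Finset.sum_congr rfl fun i _ => idTensor_kron ψ (x i) (y i)⟩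

lemma fwd2 {a : ℕ} {ρ : Matrix (Fin a × Fin a) (Fin a × Fin a) ℂ} (hρ : ρ ∈ SepCone a a)
    {σ : MMap a a} (hσ : IsPosMap σ) : (idTensor (adjMap σ) ρ).PosSemidef := by
  rw [sepCone_eq] at hρ
  refine closure_op (idTensor_cont (adjMap σ)) (fun X hX => ?_) psd_isClosed hρ
  obtain ⟨r, x, y, h, rfl⟩ := hX
  rw [idTensor_sum]
  refine Finset.sum_induction _ _ (fun A B hA hB => hA.add hB) Matrix.PosSemidef.zero
    (fun i _ => ?_)
  rw [idTensor_kron]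
  exact kron_psd (h i).1 (adj_pos hσ _ (h i).2)

lemma fwd4 {a : ℕ} {ρ : Matrix (Fin a × Fin a) (Fin a × Fin a) ℂ} (hρ : ρ ∈ SepCone a a)
    {σ : MMap a a} (hσ : IsPosMap σ) : (tensorId σ ρ).PosSemidef := by
  rw [sepCone_eq] at hρ
  refine closure_op (tensorId_cont σ) (fun X hX => ?_) psd_isClosed hρ
  obtain ⟨r, x, y, h, rfl⟩ := hX
  rw [tensorId_sum]
  refine Finset.sum_induction _ _ (fun A B hA hB => hA.add hB) Matrix.PosSemidef.zero
    (fun i _ => ?_)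
  rw [tensorId_kron]
  exact kron_psd (hσ _ (h i).1) (h i).2

-- the identity map is CP, and ampliations of the identity are trivial
lemma id_cp {a : ℕ} : IsCP (LinearMap.id : MMap a a) := by
  show (choi (LinearMap.id : MMap a a)).PosSemidef
  have h : choi (LinearMap.id : MMap a a) =
      (Matrix.of fun (_ : Fin 1) (p : Fin a × Fin a) => if p.1 = p.2 then (1 : ℂ) else 0)ᴴ *
      (Matrix.of fun (_ : Fin 1) (p : Fin a × Fin a) => if p.1 = p.2 then (1 : ℂ) else 0) := by
    ext p q
    simp only [choi, Matrix.of_apply, LinearMap.id_coe, id_eq, Matrix.mul_apply,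
      Matrix.conjTranspose_apply, Matrix.single, Fin.sum_univ_one]
    by_cases h1 : p.1 = p.2 <;> by_cases h2 : q.1 = q.2 <;>
      simp [h1, h2, Matrix.of_apply]
  rw [h]
  exact Matrix.posSemidef_conjTranspose_mul_self _

lemma idTensor_id {a b : ℕ} (ρ : Matrix (Fin a × Fin b) (Fin a × Fin b) ℂ) :
    idTensor (LinearMap.id : MMap b b) ρ = ρ := rfl

lemma tensorId_id {a b : ℕ} (ρ : Matrix (Fin a × Fin b) (Fin a × Fin b) ℂ) :
    tensorId (LinearMap.id : MMap a a) ρ = ρ := rfl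

end S18e
namespace S18f
open S18 S18b S18c S18d S18e

section HB
attribute [local instance] Matrix.normedAddCommGroup Matrix.normedSpace

lemma horodecki {a : ℕ} (ρ : Matrix (Fin a × Fin a) (Fin a × Fin a) ℂ) (hρ : ρ.PosSemidef)
    (h : ∀ σ : MMap a a, IsPosMap σ → (idTensor (adjMap σ) ρ).PosSemidef) :
    ρ ∈ SepCone a a := by
  by_contra hmem
  rw [sepCone_eq] at hmem
  have : LocallyConvexSpace ℝ (Matrix (Fin a × Fin a) (Fin a × Fin a) ℂ) :=
    NormedSpace.toLocallyConvexSpace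
  obtain ⟨f, u, hfρ, hfS⟩ := geometric_hahn_banach_point_closed
    (sepCone_convex a a) isClosed_closure hmem
  have hu0 : u < 0 := by simpa using hfS 0 (subset_closure (sepGen_zero a a))
  have hfpos : ∀ b ∈ closure (sepGen a a), 0 ≤ f b := by
    intro b hb
    by_contra hneg
    push_neg at hneg
    have hc : (0 : ℝ) ≤ (u - 1) / f b := by
      rw [← neg_div_neg_eq]
      exact div_nonneg (by linarith) (by linarith)
    have hmem2 : ((u - 1) / f b) • b ∈ closure (sepGen a a) := sepCone_smul hb hc
    have h5 := hfS _ hmem2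
    rw [ContinuousLinearMap.map_smul, smul_eq_mul, div_mul_cancel₀ _ (ne_of_lt hneg)] at h5
    linarith
  -- the matrix representing the real-linear functional f
  set Eb : (Fin a × Fin a) → (Fin a × Fin a) → Matrix (Fin a × Fin a) (Fin a × Fin a) ℂ :=
    fun p q => Matrix.single p q 1 with hEb
  set Bm : Matrix (Fin a × Fin a) (Fin a × Fin a) ℂ :=
    Matrix.of fun p q =>
      ((f (Eb p q) : ℝ) : ℂ) + ((f (Complex.I • Eb p q) : ℝ) : ℂ) * Complex.I with hBm
  set L : Matrix (Fin a × Fin a) (Fin a × Fin a) ℂ → ℂ :=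
    fun X => ∑ p, ∑ q, (starRingEnd ℂ) (Bm p q) * X p q with hL
  have c0 : ∀ X, (L X).re = f X := by
    intro X
    have hterm : ∀ p q : Fin a × Fin a,
        ((starRingEnd ℂ) (Bm p q) * X p q).re = f (Matrix.single p q (X p q)) := by
      intro p q
      have hsb : Matrix.single p q (X p q)
          = (X p q).re • Eb p q + (X p q).im • (Complex.I • Eb p q) := by
        ext s t
        simp only [Matrix.single, Matrix.of_apply, Matrix.add_apply, Matrix.smul_apply,
          Complex.real_smul, smul_eq_mul, hEb]
        by_cases hc1 : p = s ∧ q = t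
        · simp only [if_pos hc1, mul_one]
          linear_combination -(Complex.re_add_im (X p q))
        · simp [hc1]
      rw [hsb, map_add, f.map_smul, f.map_smul, smul_eq_mul, smul_eq_mul]
      rw [hBm]
      simp only [Matrix.of_apply, map_add, _root_.map_mul, Complex.conj_ofReal, Complex.conj_I]
      simp only [Complex.add_re, Complex.sub_re, Complex.sub_im, Complex.add_im,
        Complex.mul_re, Complex.ofReal_re, Complex.ofReal_im,
        Complex.neg_re, Complex.neg_im, Complex.mul_im, Complex.I_re, Complex.I_im]
      ring
    rw [hL]
    conv_rhs => rw [Matrix.matrix_eq_sum_single X]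
    rw [map_sum, Complex.re_sum]
    refine Finset.sum_congr rfl fun p _ => ?_
    rw [map_sum, Complex.re_sum]
    exact Finset.sum_congr rfl fun q _ => hterm p q
  set Y : Matrix (Fin a × Fin a) (Fin a × Fin a) ℂ :=
    Matrix.of fun p q => ((starRingEnd ℂ) (Bm p q) + Bm q p) / 2 with hY
  have hYherm : Y.IsHermitian := by
    show Yᴴ = Y
    ext p q
    rw [Matrix.conjTranspose_apply, hY]
    simp only [Matrix.of_apply, Complex.star_def, map_div₀, map_add, Complex.conj_conj,
      map_ofNat]
    ring
  have c2 : ∀ X : Matrix (Fin a × Fin a) (Fin a × Fin a) ℂ, X.IsHermitian →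
      mpair Y X = ((f X : ℝ) : ℂ) := by
    intro X hX
    have h2 : (starRingEnd ℂ) (L X) = ∑ p, ∑ q, Bm q p * X p q := by
      rw [hL, map_sum]
      have e1 : ∀ p, (starRingEnd ℂ) (∑ q, (starRingEnd ℂ) (Bm p q) * X p q)
          = ∑ q, Bm p q * X q p := by
        intro p
        rw [map_sum]
        refine Finset.sum_congr rfl fun q _ => ?_
        rw [_root_.map_mul, Complex.conj_conj, herm_apply hX]
      calc ∑ p, (starRingEnd ℂ) (∑ q, (starRingEnd ℂ) (Bm p q) * X p q)
          = ∑ p, ∑ q, Bm p q * X q p := Finset.sum_congr rfl fun p _ => e1 p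
        _ = ∑ q, ∑ p, Bm p q * X q p := Finset.sum_comm
        _ = ∑ p, ∑ q, Bm q p * X p q := rfl
    have e2 : mpair Y X = (L X + (starRingEnd ℂ) (L X)) / 2 := by
      rw [mpair_eq_sum, h2]
      simp only [hL]
      rw [← Finset.sum_add_distrib, Finset.sum_div]
      refine Finset.sum_congr rfl fun p _ => ?_
      rw [← Finset.sum_add_distrib, Finset.sum_div]
      refine Finset.sum_congr rfl fun q _ => ?_
      rw [hY]
      simp only [Matrix.of_apply]
      ring
    rw [e2, Complex.add_conj, ← c0 X]
    push_cast
    ring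
  have hbp : ∀ (x y : Mat a), x.PosSemidef → y.PosSemidef → 0 ≤ mpair Y (x ⊗ₖ y) := by
    intro x y hx hy
    rw [c2 _ (kron_psd hx hy).1]
    exact Complex.zero_le_real.2 (hfpos _ (subset_closure (sepGen_kron hx hy)))
  have hσ : IsPosMap (mapOfMat Y) := mapOfMat_pos hYherm hbp
  have hPSD := h (mapOfMat Y) hσ
  set ξ : (Fin a × Fin a) → ℂ := fun p => if p.1 = p.2 then 1 else 0 with hξ
  have hform := hPSD.dotProduct_mulVec_nonneg ξ
  have hMe : ∀ i j : Fin a, idTensor (adjMap (mapOfMat Y)) ρ (i, i) (j, j)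
      = ∑ s, ∑ t, Y (i, s) (j, t) * ρ (i, s) (j, t) := by
    intro i j
    show adjMap (mapOfMat Y) (Matrix.of fun s t => ρ (i, s) (j, t)) i j = _
    rw [adj_apply, mpair_eq_sum]
    refine Finset.sum_congr rfl fun s _ => Finset.sum_congr rfl fun t _ => ?_
    simp only [Matrix.of_apply]
    congr 1
    rw [mapOfMat_apply]
    simp [Matrix.single, ite_and, Finset.sum_ite_eq, Finset.sum_ite_eq']
  have hkey : star ξ ⬝ᵥ (idTensor (adjMap (mapOfMat Y)) ρ *ᵥ ξ) = mpair Y ρ := by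
    rw [dot_eq_sum, mpair_eq_sum]
    rw [Fintype.sum_prod_type]
    have lhs1 : ∀ i : Fin a, ∀ k : Fin a,
        (∑ q : Fin a × Fin a, (starRingEnd ℂ) (ξ (i, k))
          * idTensor (adjMap (mapOfMat Y)) ρ (i, k) q * ξ q)
        = if i = k then (∑ j, idTensor (adjMap (mapOfMat Y)) ρ (i, k) (j, j)) else 0 := by
      intro i k
      by_cases hik : i = k
      · subst hik
        rw [if_pos rfl, Fintype.sum_prod_type]
        refine Finset.sum_congr rfl fun j _ => ?_
        simp [hξ, Finset.sum_ite_eq, mul_ite, mul_one, mul_zero]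
      · simp [hξ, hik]
    calc ∑ i, ∑ k, (∑ q : Fin a × Fin a, (starRingEnd ℂ) (ξ (i, k))
          * idTensor (adjMap (mapOfMat Y)) ρ (i, k) q * ξ q)
        = ∑ i, ∑ k, if i = k then
            (∑ j, idTensor (adjMap (mapOfMat Y)) ρ (i, k) (j, j)) else 0 := by
          exact Finset.sum_congr rfl fun i _ => Finset.sum_congr rfl fun k _ => lhs1 i k
      _ = ∑ i, ∑ j, idTensor (adjMap (mapOfMat Y)) ρ (i, i) (j, j) := by
          refine Finset.sum_congr rfl fun i _ => ?_
          rw [Finset.sum_ite_eq Finset.univ i]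
          simp
      _ = ∑ i, ∑ j, ∑ s, ∑ t, Y (i, s) (j, t) * ρ (i, s) (j, t) := by
          exact Finset.sum_congr rfl fun i _ => Finset.sum_congr rfl fun j _ => hMe i j
      _ = ∑ i, ∑ s, ∑ j, ∑ t, Y (i, s) (j, t) * ρ (i, s) (j, t) :=
          Finset.sum_congr rfl fun i _ => Finset.sum_comm
      _ = ∑ p : Fin a × Fin a, ∑ q : Fin a × Fin a, Y p q * ρ p q := by
          rw [Fintype.sum_prod_type]
          refine Finset.sum_congr rfl fun i _ => Finset.sum_congr rfl fun s _ => ?_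
          rw [Fintype.sum_prod_type]
  rw [hkey, c2 ρ hρ.1] at hform
  have hnn : (0 : ℝ) ≤ f ρ := Complex.zero_le_real.1 hform
  linarith

end HB
end S18f
/-- ampliation characterizations of separability of a state. -/
theorem stmt18 {a : ℕ} (ρ : Matrix (Fin a × Fin a) (Fin a × Fin a) ℂ)
    (hρ : ρ.PosSemidef) :
    (ρ ∈ SepCone a a ↔ ∀ ψ : MMap a a, IsCP ψ → tensorId ψ ρ ∈ SepCone a a) ∧
    (ρ ∈ SepCone a a ↔ ∀ σ : MMap a a, IsPosMap σ → (idTensor (adjMap σ) ρ).PosSemidef) ∧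
    (ρ ∈ SepCone a a ↔ ∀ ψ : MMap a a, IsCP ψ → idTensor ψ ρ ∈ SepCone a a) ∧
    (ρ ∈ SepCone a a ↔ ∀ σ : MMap a a, IsPosMap σ → (tensorId σ ρ).PosSemidef) := by
  refine ⟨⟨fun hs ψ hψ => S18e.fwd1 hs hψ, fun h => ?_⟩,
    ⟨fun hs σ hσ => S18e.fwd2 hs hσ, fun h => S18f.horodecki ρ hρ h⟩,
    ⟨fun hs ψ hψ => S18e.fwd3 hs hψ, fun h => ?_⟩,
    ⟨fun hs σ hσ => S18e.fwd4 hs hσ, fun h => ?_⟩⟩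
  · have h1 := h LinearMap.id S18e.id_cp
    rwa [S18e.tensorId_id] at h1
  · have h1 := h LinearMap.id S18e.id_cp
    rwa [S18e.idTensor_id] at h1
  · have hsw : S18d.swapM ρ ∈ SepCone a a := by
      apply S18f.horodecki _ (S18d.swapM_psd hρ)
      intro σ hσ
      rw [S18d.idTensor_swapM]
      exact S18d.swapM_psd (h (adjMap σ) (S18c.adj_pos hσ))
    have h2 := S18e.sepCone_swap hsw
    rwa [S18d.swapM_swapM] at h2
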